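/- arXiv:1907.11192 — 2 statements merged into one kernel-verified Lean document; each statement's English description precedes it below -/
import Mathlib

section
/- For each dyadic $N$ and frequency-localized $f$ with $\hat{f}$ supported in $\{|n| \sim N\}$ on $\mathbb{T}^d$, assuming the Strichartz estimate $\|e^{it\Delta} f\|_{L^p_{x,t}(\mathbb{T}^{d+1})} \lesssim N^{\frac{d}{2}-\frac{d+2}{p}+\varepsilon}\|f\|_{L^2}$ with $p = 2\frac{d+2}{d}$, one has the frequency-localized maximal estimate $\| \sup_{0\leq t \leq 1} |e^{it\Delta} f| \|_{L^{2\frac{d+2}{d}}(\mathbb{T}^d)} \lesssim N^{\frac{d}{d+2}+\varepsilon} \|f\|_{L^2(\mathbb{T}^d)}$. -/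
open MeasureTheory Complex intervalIntegral

noncomputable section

/-- Japanese bracket `⟨n⟩` of a lattice point. -/
def jap {d : ℕ} (n : Fin d → ℤ) : ℝ := Real.sqrt (1 + ∑ i, ((n i : ℝ))^2)

/-- Euclidean norm of a lattice point. -/
def inorm {d : ℕ} (n : Fin d → ℤ) : ℝ := Real.sqrt (∑ i, ((n i : ℝ))^2)

/-- Solution of the free Schrödinger equation on `𝕋^d` with Fourier coefficients `c`. -/
def freeSol {d : ℕ} (c : (Fin d → ℤ) → ℂ) (x : Fin d → ℝ) (t : ℝ) : ℂ :=
  ∑' n : Fin d → ℤ, c n * Complex.exp (Complex.I *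
    (((∑ i, (n i : ℝ) * x i) - (∑ i, ((n i : ℝ))^2) * t : ℝ) : ℂ))

/-- Sobolev `H^s(𝕋^d)` norm in terms of Fourier coefficients. -/
def HsNorm {d : ℕ} (s : ℝ) (c : (Fin d → ℤ) → ℂ) : ℝ :=
  Real.sqrt (∑' n : Fin d → ℤ, (jap n) ^ (2*s) * ‖c n‖^2)

/-- Fundamental domain of the torus `𝕋^d`. -/
def torusBox (d : ℕ) : Set (Fin d → ℝ) := Set.univ.pi fun _ => Set.Icc 0 (2*Real.pi)

/-- `L^2` norm on the torus. -/
def torusL2 {d : ℕ} (g : (Fin d → ℝ) → ℝ) : ℝ :=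
  Real.sqrt (∫ x in torusBox d, (g x)^2)

/-- `L^p` norm on the torus. -/
def torusLp {d : ℕ} (p : ℝ) (g : (Fin d → ℝ) → ℝ) : ℝ :=
  (∫ x in torusBox d, |g x| ^ p) ^ (1/p)

/-- Space-time `L^p` norm on `𝕋^{d+1}`. -/
def stLp {d : ℕ} (p : ℝ) (F : (Fin d → ℝ) → ℝ → ℂ) : ℝ :=
  (∫ x in torusBox d, ∫ t in Set.Icc (0:ℝ) (2*Real.pi), ‖F x t‖ ^ p) ^ (1/p)

/-- Fourier projection onto the annulus `N/2 < |n| ≤ N`. -/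
def projAnn {d : ℕ} (N : ℝ) (c : (Fin d → ℤ) → ℂ) : (Fin d → ℤ) → ℂ :=
  fun n => if N/2 < inorm n ∧ inorm n ≤ N then c n else 0

/-- Space-time Fourier transform on `𝕋^d × ℝ`. -/
def stFourierT {d : ℕ} (F : (Fin d → ℝ) → ℝ → ℂ) (n : Fin d → ℤ) (τ : ℝ) : ℂ :=
  ∫ x in torusBox d, ∫ t : ℝ,
    F x t * Complex.exp (-Complex.I * (((∑ i, (n i : ℝ) * x i) + τ * t : ℝ) : ℂ))

/-- Bourgain `X^{s,b}` norm on `𝕋^d × ℝ`. -/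
def XNormT {d : ℕ} (s b : ℝ) (F : (Fin d → ℝ) → ℝ → ℂ) : ℝ :=
  Real.sqrt (∫ τ : ℝ, ∑' n : Fin d → ℤ,
    (1 + (τ + ∑ i, ((n i : ℝ))^2)^2) ^ b * (jap n) ^ (2*s) * ‖stFourierT F n τ‖^2)




lemma ortho (l : ℤ) : ∫ t in (0:ℝ)..(2*Real.pi), Complex.exp ((l:ℂ) * t * Complex.I)
    = if l = 0 then ((2*Real.pi : ℝ) : ℂ) else 0 := by
  by_cases hl : l = 0
  · simp [hl]
  · rw [if_neg hl]
    have hc : (l:ℂ) * Complex.I ≠ 0 := by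
      simp [Complex.ext_iff, Complex.I_ne_zero, Int.cast_injective]
      exact_mod_cast hl
    have : ∀ t : ℝ, Complex.exp ((l:ℂ) * t * Complex.I)
        = Complex.exp (((l:ℂ) * Complex.I) * t) := by intro t; ring_nf
    rw [intervalIntegral.integral_congr (fun t _ => this t)]
    rw [integral_exp_mul_complex hc]
    have h1 : (l:ℂ) * Complex.I * ((2*Real.pi : ℝ):ℂ) = l * (2 * Real.pi * Complex.I) := by
      push_cast; ring
    rw [h1, Complex.exp_int_mul_two_pi_mul_I]
    simp

lemma count_lemma (m M : ℕ) (h1 : 1 ≤ m) (h2 : m ≤ M) :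
    ∑ j ∈ Finset.range M, ∑ k ∈ Finset.range M,
      (if (m:ℤ) + j = (M:ℤ) + k then (1:ℂ) else 0) = (m:ℂ) := by
  have hinner : ∀ j ∈ Finset.range M,
      (∑ k ∈ Finset.range M, if (m:ℤ) + j = (M:ℤ) + k then (1:ℂ) else 0)
        = if M ≤ m + j then 1 else 0 := by
    intro j hj
    simp only [Finset.mem_range] at hj
    by_cases hMm : M ≤ m + j
    · rw [if_pos hMm, Finset.sum_eq_single (m + j - M)]
      · rw [if_pos (by omega)]
      · intro k _ hne
        rw [if_neg (by omega)]
      · intro h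
        exact absurd (Finset.mem_range.mpr (by omega)) h
    · rw [if_neg hMm]
      apply Finset.sum_eq_zero
      intro k _
      rw [if_neg (by omega)]
  rw [Finset.sum_congr rfl hinner, Finset.sum_boole]
  have : (Finset.range M).filter (fun j => M ≤ m + j) = Finset.Ico (M - m) M := by
    ext j; simp only [Finset.mem_filter, Finset.mem_range, Finset.mem_Ico]; omega
  rw [this, Nat.card_Ico]
  norm_cast
  omega

def Dker (M : ℕ) (s : ℝ) : ℂ := ∑ j ∈ Finset.range M, Complex.exp (((j:ℝ) * s) * Complex.I)

def Kc (M : ℕ) (s : ℝ) : ℂ := -Complex.I * ∑ j ∈ Finset.range M, ∑ k ∈ Finset.range M,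
  Complex.exp ((((j:ℝ) - k - M) * s) * Complex.I)

lemma Kc_eq (M : ℕ) (s : ℝ) : Kc M s = -Complex.I *
    (Complex.exp (((-(M:ℝ) * s) : ℝ) * Complex.I) * (Dker M s * (starRingEnd ℂ) (Dker M s))) := by
  unfold Kc Dker
  congr 1
  rw [map_sum, Finset.sum_mul_sum, Finset.mul_sum]
  refine Finset.sum_congr rfl fun j _ => ?_
  rw [Finset.mul_sum]
  refine Finset.sum_congr rfl fun k _ => ?_
  rw [← Complex.exp_conj, ← Complex.exp_add, ← Complex.exp_add]
  congr 1
  simp only [map_mul, Complex.conj_ofReal, Complex.conj_I]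
  push_cast
  ring

lemma norm_Kc (M : ℕ) (s : ℝ) : ‖Kc M s‖ = Complex.normSq (Dker M s) := by
  rw [Kc_eq, Complex.mul_conj]
  simp only [norm_mul, norm_neg, Complex.norm_I, one_mul, Complex.norm_real]
  rw [Complex.norm_exp_ofReal_mul_I]
  simp [Complex.normSq_nonneg, abs_of_nonneg]

lemma integral_normSq_Dker (M : ℕ) :
    ∫ s in (0:ℝ)..(2*Real.pi), (Complex.normSq (Dker M s) : ℝ) = 2 * Real.pi * M := by
  have h : ∫ s in (0:ℝ)..(2*Real.pi), ((Complex.normSq (Dker M s) : ℝ) : ℂ)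
      = ((2 * Real.pi * M : ℝ) : ℂ) := by
    have hfun : ∀ s : ℝ, ((Complex.normSq (Dker M s) : ℝ) : ℂ)
        = ∑ j ∈ Finset.range M, ∑ k ∈ Finset.range M,
          Complex.exp ((((j:ℤ) - k : ℤ) : ℂ) * s * Complex.I) := by
      intro s
      rw [← Complex.mul_conj]
      unfold Dker
      rw [map_sum, Finset.sum_mul_sum]
      refine Finset.sum_congr rfl fun j _ => Finset.sum_congr rfl fun k _ => ?_
      rw [← Complex.exp_conj, ← Complex.exp_add]
      congr 1
      simp only [map_mul, Complex.conj_ofReal, Complex.conj_I]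
      push_cast
      ring
    rw [intervalIntegral.integral_congr (fun s _ => hfun s)]
    rw [intervalIntegral.integral_finset_sum
      (fun j _ => (Continuous.intervalIntegrable (by continuity) _ _))]
    have : ∀ j ∈ Finset.range M, ∀ k ∈ Finset.range M,
        (∫ s in (0:ℝ)..(2*Real.pi), Complex.exp ((((j:ℤ) - k : ℤ) : ℂ) * s * Complex.I))
          = if (j:ℤ) - k = 0 then ((2*Real.pi : ℝ) : ℂ) else 0 := fun j _ k _ => ortho _
    calc ∑ j ∈ Finset.range M, ∫ s in (0:ℝ)..(2*Real.pi), ∑ k ∈ Finset.range M,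
          Complex.exp ((((j:ℤ) - k : ℤ) : ℂ) * s * Complex.I)
        = ∑ j ∈ Finset.range M, ∑ k ∈ Finset.range M,
            ∫ s in (0:ℝ)..(2*Real.pi), Complex.exp ((((j:ℤ) - k : ℤ) : ℂ) * s * Complex.I) := by
          refine Finset.sum_congr rfl fun j _ => ?_
          apply intervalIntegral.integral_finset_sum
          intro k _
          exact (Continuous.intervalIntegrable (by continuity) _ _)
      _ = ∑ j ∈ Finset.range M, ∑ k ∈ Finset.range M,
            (if (j:ℤ) - k = 0 then ((2*Real.pi : ℝ) : ℂ) else 0) := by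
          exact Finset.sum_congr rfl fun j hj => Finset.sum_congr rfl fun k hk => this j hj k hk
      _ = ((2 * Real.pi * M : ℝ) : ℂ) := by
          have : ∀ j ∈ Finset.range M, (∑ k ∈ Finset.range M,
              if (j:ℤ) - k = 0 then ((2*Real.pi : ℝ) : ℂ) else 0) = ((2*Real.pi : ℝ) : ℂ) := by
            intro j hj
            rw [Finset.sum_eq_single j]
            · rw [if_pos (by omega)]
            · intro k _ hne; rw [if_neg (by omega)]
            · intro h; exact absurd hj h
          rw [Finset.sum_congr rfl this, Finset.sum_const, Finset.card_range]
          push_cast; ring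
  have h2 := RCLike.intervalIntegral_ofReal (𝕜 := ℂ) (f := fun s => (Complex.normSq (Dker M s) : ℝ))
    (μ := volume) (a := 0) (b := 2*Real.pi)
  rw [show ((2 * Real.pi * M : ℝ) : ℂ) = RCLike.ofReal (K := ℂ) (2*Real.pi*M) from rfl] at h
  rw [show (fun s => ((Complex.normSq (Dker M s) : ℝ) : ℂ)) = (fun s => RCLike.ofReal (K := ℂ) (Complex.normSq (Dker M s))) from rfl] at h
  rw [h2] at h
  exact_mod_cast h

lemma kernel_int (M mf : ℕ) (h1 : 1 ≤ mf) (h2 : mf ≤ M) :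
    ∫ s in (0:ℝ)..(2*Real.pi), Complex.exp (((mf:ℝ) * s) * Complex.I) * Kc M s
      = -Complex.I * (2*Real.pi) * mf := by
  have hfun : ∀ s : ℝ, Complex.exp (((mf:ℝ) * s) * Complex.I) * Kc M s
      = ∑ j ∈ Finset.range M, ∑ k ∈ Finset.range M,
        -Complex.I * Complex.exp ((((mf:ℤ) + j - k - M : ℤ) : ℂ) * s * Complex.I) := by
    intro s
    unfold Kc
    simp only [Finset.mul_sum]
    refine Finset.sum_congr rfl fun j _ => Finset.sum_congr rfl fun k _ => ?_
    rw [show Complex.exp (((mf:ℝ) * s) * Complex.I) *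
        (-Complex.I * Complex.exp ((((j:ℝ) - k - M) * s) * Complex.I))
      = -Complex.I * (Complex.exp (((mf:ℝ) * s) * Complex.I) *
        Complex.exp ((((j:ℝ) - k - M) * s) * Complex.I)) from by ring, ← Complex.exp_add]
    congr 2
    push_cast
    ring
  rw [intervalIntegral.integral_congr (fun s _ => hfun s)]
  rw [intervalIntegral.integral_finset_sum
    (fun j _ => (Continuous.intervalIntegrable (by continuity) _ _))]
  have : ∀ j ∈ Finset.range M,
      (∫ s in (0:ℝ)..(2*Real.pi), ∑ k ∈ Finset.range M,
        -Complex.I * Complex.exp ((((mf:ℤ) + j - k - M : ℤ) : ℂ) * s * Complex.I))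
      = ∑ k ∈ Finset.range M, -Complex.I * (2*Real.pi) *
          (if (mf:ℤ) + j = (M:ℤ) + k then (1:ℂ) else 0) := by
    intro j _
    rw [intervalIntegral.integral_finset_sum
      (fun k _ => (Continuous.intervalIntegrable (by continuity) _ _))]
    refine Finset.sum_congr rfl fun k _ => ?_
    rw [intervalIntegral.integral_const_mul, ortho]
    by_cases hc : (mf:ℤ) + j - k - M = 0
    · rw [if_pos hc, if_pos (by omega)]; push_cast; ring
    · rw [if_neg hc, if_neg (by omega)]; ring
  rw [Finset.sum_congr rfl this]
  have : ∑ j ∈ Finset.range M, ∑ k ∈ Finset.range M, -Complex.I * (2*Real.pi) *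
      (if (mf:ℤ) + j = (M:ℤ) + k then (1:ℂ) else 0)
      = -Complex.I * (2*Real.pi) * ∑ j ∈ Finset.range M, ∑ k ∈ Finset.range M,
        (if (mf:ℤ) + j = (M:ℤ) + k then (1:ℂ) else 0) := by
    rw [Finset.mul_sum]
    exact Finset.sum_congr rfl fun j _ => by rw [Finset.mul_sum]
  rw [this, count_lemma mf M h1 h2]

section Core

variable {ι : Type*} (s : Finset ι) (a : ι → ℂ) (m : ι → ℕ)

def gg : ℝ → ℂ := fun t => ∑ n ∈ s, a n * Complex.exp (((-((m n : ℝ) * t)) : ℝ) * Complex.I)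

def gd : ℝ → ℂ := fun t => ∑ n ∈ s,
  a n * (Complex.exp (((-((m n : ℝ) * t)) : ℝ) * Complex.I) * ((((-((m n : ℝ))) : ℝ) : ℂ) * Complex.I))

lemma gg_cont : Continuous (gg s a m) := by
  unfold gg
  exact continuous_finset_sum _ fun n _ => continuous_const.mul (by continuity)

lemma gd_cont : Continuous (gd s a m) := by
  unfold gd
  exact continuous_finset_sum _ fun n _ => continuous_const.mul (by continuity)

lemma gg_deriv (t : ℝ) : HasDerivAt (gg s a m) (gd s a m t) t := by
  unfold gg gd
  apply HasDerivAt.fun_sum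
  intro n _
  have h1 : HasDerivAt (fun t : ℝ => -((m n : ℝ) * t)) (-((m n : ℝ))) t := by
    simpa using ((hasDerivAt_id t).const_mul ((m n : ℝ))).fun_neg
  exact ((h1.ofReal_comp.mul_const Complex.I).cexp).const_mul (a n)

lemma gg_periodic : Function.Periodic (gg s a m) (2*Real.pi) := by
  intro t
  unfold gg
  refine Finset.sum_congr rfl fun n _ => ?_
  congr 1
  have h5 := Complex.exp_int_mul_two_pi_mul_I (-(m n : ℤ))
  have : ((-((m n : ℝ) * (t + 2*Real.pi))) : ℝ) * Complex.I
      = ((-((m n : ℝ) * t)) : ℝ) * Complex.I + ((-(m n : ℤ) : ℤ) : ℂ) * (2 * Real.pi * Complex.I) := by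
    push_cast; ring
  rw [this, Complex.exp_add, h5, mul_one]

lemma gg_conv (M : ℕ) (hm : ∀ n ∈ s, 1 ≤ m n ∧ m n ≤ M) (t : ℝ) :
    gd s a m t = (1/(2*Real.pi) : ℝ) • ∫ u in (0:ℝ)..(2*Real.pi), gg s a m (t - u) * Kc M u := by
  have key : ∀ n ∈ s, (∫ u in (0:ℝ)..(2*Real.pi),
      (a n * Complex.exp (((-((m n : ℝ) * (t - u))) : ℝ) * Complex.I)) * Kc M u)
      = a n * (Complex.exp (((-((m n : ℝ) * t)) : ℝ) * Complex.I) * (-Complex.I * (2*Real.pi) * (m n))) := by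
    intro n hn
    have heq : ∀ u : ℝ, (a n * Complex.exp (((-((m n : ℝ) * (t - u))) : ℝ) * Complex.I)) * Kc M u
        = (a n * Complex.exp (((-((m n : ℝ) * t)) : ℝ) * Complex.I)) *
          (Complex.exp (((m n : ℝ) * u) * Complex.I) * Kc M u) := by
      intro u
      have : Complex.exp (((-((m n : ℝ) * (t - u))) : ℝ) * Complex.I)
          = Complex.exp (((-((m n : ℝ) * t)) : ℝ) * Complex.I) *
            Complex.exp (((m n : ℝ) * u) * Complex.I) := by
        rw [← Complex.exp_add]; congr 1; push_cast; ring
      rw [this]; ring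
    rw [intervalIntegral.integral_congr (fun u _ => heq u), intervalIntegral.integral_const_mul,
      kernel_int M (m n) (hm n hn).1 (hm n hn).2, mul_assoc]
  unfold gg gd
  rw [intervalIntegral.integral_congr (g := fun u => ∑ n ∈ s,
      (a n * Complex.exp (((-((m n : ℝ) * (t - u))) : ℝ) * Complex.I)) * Kc M u)
      (fun u _ => by rw [Finset.sum_mul])]
  rw [intervalIntegral.integral_finset_sum (fun n _ =>
    (Continuous.intervalIntegrable (by
      apply Continuous.mul
      · exact continuous_const.mul (by continuity)
      · unfold Kc
        exact continuous_const.mul (continuous_finset_sum _ fun j _ =>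
          continuous_finset_sum _ fun k _ => by continuity)) _ _))]
  rw [Finset.smul_sum]
  refine Finset.sum_congr rfl fun n hn => ?_
  rw [key n hn, Complex.real_smul]
  have hpi : (Real.pi : ℂ) ≠ 0 := by exact_mod_cast Real.pi_ne_zero
  push_cast
  field_simp

end Core

def wker (M : ℕ) (u : ℝ) : ℝ := Complex.normSq (Dker M u)

lemma wker_cont (M : ℕ) : Continuous (wker M) := by
  unfold wker Dker
  exact Complex.continuous_normSq.comp (continuous_finset_sum _ fun j _ => by continuity)

lemma wker_nonneg (M : ℕ) (u : ℝ) : 0 ≤ wker M u := Complex.normSq_nonneg _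

lemma wker_integral (M : ℕ) : ∫ u in (0:ℝ)..(2*Real.pi), wker M u = 2 * Real.pi * M :=
  integral_normSq_Dker M

section Core2

variable {ι : Type*} (s : Finset ι) (a : ι → ℂ) (m : ι → ℕ)

lemma norm_gd_le (M : ℕ) (hm : ∀ n ∈ s, 1 ≤ m n ∧ m n ≤ M) (t : ℝ) :
    ‖gd s a m t‖ ≤ (1/(2*Real.pi)) * ∫ u in (0:ℝ)..(2*Real.pi), ‖gg s a m (t - u)‖ * wker M u := by
  rw [gg_conv s a m M hm t]
  rw [norm_smul]
  have h2pi : (0:ℝ) ≤ 2 * Real.pi := by positivity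
  rw [Real.norm_of_nonneg (by positivity : (0:ℝ) ≤ 1/(2*Real.pi))]
  apply mul_le_mul_of_nonneg_left _ (by positivity)
  refine le_trans (intervalIntegral.norm_integral_le_integral_norm h2pi) ?_
  apply le_of_eq
  apply intervalIntegral.integral_congr
  intro u _
  show ‖gg s a m (t-u) * Kc M u‖ = ‖gg s a m (t-u)‖ * wker M u
  rw [norm_mul, norm_Kc]
  rfl

lemma young_step (p : ℝ) (hp : 2 < p) (M : ℕ) (t u : ℝ) :
    ‖gg s a m t‖ ^ (p-1) * (‖gg s a m (t - u)‖ * wker M u)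
      ≤ wker M u * ((1 - 1/p) * ‖gg s a m t‖ ^ p + (1/p) * ‖gg s a m (t-u)‖ ^ p) := by
  have hp1 : (1:ℝ) < p := by linarith
  have hpq : (p/(p-1)).HolderConjugate p := by
    refine Real.holderConjugate_iff.mpr ⟨?_, ?_⟩
    · rw [lt_div_iff₀ (by linarith)]; linarith
    · field_simp; ring
  have hy := Real.young_inequality_of_nonneg
    (Real.rpow_nonneg (norm_nonneg (gg s a m t)) (p-1)) (norm_nonneg (gg s a m (t-u))) hpq
  have hA : (‖gg s a m t‖ ^ (p-1)) ^ (p/(p-1)) = ‖gg s a m t‖ ^ p := by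
    rw [← Real.rpow_mul (norm_nonneg _)]
    congr 1
    rw [mul_comm]
    exact div_mul_cancel₀ p (by linarith)
  rw [hA] at hy
  have hrw : ‖gg s a m t‖ ^ p / (p/(p-1)) = (1 - 1/p) * ‖gg s a m t‖ ^ p := by
    have hp0 : p ≠ 0 := by linarith
    have hp1' : p - 1 ≠ 0 := by linarith
    field_simp
  rw [hrw] at hy
  calc ‖gg s a m t‖ ^ (p-1) * (‖gg s a m (t - u)‖ * wker M u)
      = (‖gg s a m t‖ ^ (p-1) * ‖gg s a m (t - u)‖) * wker M u := by ring
    _ ≤ ((1 - 1/p) * ‖gg s a m t‖ ^ p + ‖gg s a m (t-u)‖ ^ p / p) * wker M u :=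
        mul_le_mul_of_nonneg_right hy (wker_nonneg M u)
    _ = wker M u * ((1 - 1/p) * ‖gg s a m t‖ ^ p + (1/p) * ‖gg s a m (t-u)‖ ^ p) := by ring

end Core2

section Core3

variable {ι : Type*} (s : Finset ι) (a : ι → ℂ) (m : ι → ℕ)

lemma gg_norm_rpow_cont (e : ℝ) (he : 0 ≤ e) : Continuous (fun t => ‖gg s a m t‖ ^ e) :=
  ((gg_cont s a m).norm).rpow_const (fun _ => Or.inr he)

lemma gg_bound (t : ℝ) : ‖gg s a m t‖ ≤ ∑ n ∈ s, ‖a n‖ := by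
  refine le_trans (norm_sum_le _ _) (Finset.sum_le_sum fun n _ => ?_)
  rw [norm_mul, Complex.norm_exp_ofReal_mul_I, mul_one]

lemma shift_integral (u : ℝ) (e : ℝ) :
    ∫ t in (0:ℝ)..(2*Real.pi), ‖gg s a m (t - u)‖ ^ e
      = ∫ t in (0:ℝ)..(2*Real.pi), ‖gg s a m t‖ ^ e := by
  rw [intervalIntegral.integral_comp_sub_right (fun t => ‖gg s a m t‖ ^ e) u]
  have hper : Function.Periodic (fun t => ‖gg s a m t‖ ^ e) (2*Real.pi) := fun t => by
    simp only [gg_periodic s a m t]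
  have h := hper.intervalIntegral_add_eq (-u) 0
  rw [zero_sub, show 2*Real.pi - u = -u + 2*Real.pi from by ring]
  simpa using h

lemma WW_cont (p : ℝ) (hp : 0 ≤ p) (M : ℕ) :
    Continuous (fun t => ∫ u in Set.Ioc (0:ℝ) (2*Real.pi),
      wker M u * ‖gg s a m (t - u)‖ ^ p) := by
  have h1 : ∀ t : ℝ, MeasureTheory.AEStronglyMeasurable
      (fun u => wker M u * ‖gg s a m (t - u)‖ ^ p)
      (volume.restrict (Set.Ioc (0:ℝ) (2*Real.pi))) := fun t =>
    ((wker_cont M).mul (((gg_norm_rpow_cont s a m p hp)).comp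
      (continuous_const.sub continuous_id))).aestronglyMeasurable
  have h4 : ∀ᵐ u ∂(volume.restrict (Set.Ioc (0:ℝ) (2*Real.pi))),
      Continuous (fun t => wker M u * ‖gg s a m (t - u)‖ ^ p) := by
    filter_upwards with u
    exact continuous_const.mul ((gg_norm_rpow_cont s a m p hp).comp
      (continuous_id.sub continuous_const))
  have h3 : MeasureTheory.Integrable (fun u => wker M u * (1 + ∑ n ∈ s, ‖a n‖) ^ p)
      (volume.restrict (Set.Ioc (0:ℝ) (2*Real.pi))) :=
    (((wker_cont M).mul continuous_const).continuousOn.integrableOn_compact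
      isCompact_Icc).mono_set Set.Ioc_subset_Icc_self
  have h2 : ∀ t : ℝ, ∀ᵐ u ∂(volume.restrict (Set.Ioc (0:ℝ) (2*Real.pi))),
      ‖wker M u * ‖gg s a m (t - u)‖ ^ p‖ ≤ wker M u * (1 + ∑ n ∈ s, ‖a n‖) ^ p := by
    intro t
    filter_upwards with u
    rw [Real.norm_of_nonneg (mul_nonneg (wker_nonneg M u) (Real.rpow_nonneg (norm_nonneg _) p))]
    apply mul_le_mul_of_nonneg_left _ (wker_nonneg M u)
    apply Real.rpow_le_rpow (norm_nonneg _) _ hp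
    have h0 : (0:ℝ) ≤ ∑ n ∈ s, ‖a n‖ := Finset.sum_nonneg fun n _ => norm_nonneg _
    linarith [gg_bound s a m (t - u)]
  exact MeasureTheory.continuous_of_dominated h1 h2 h3 h4

lemma fubini_W (p : ℝ) (hp : 0 ≤ p) (M : ℕ) :
    (∫ t in (0:ℝ)..(2*Real.pi), ∫ u in (0:ℝ)..(2*Real.pi),
        wker M u * ‖gg s a m (t - u)‖ ^ p)
      = 2 * Real.pi * M * ∫ t in (0:ℝ)..(2*Real.pi), ‖gg s a m t‖ ^ p := by
  have h2pi : (0:ℝ) ≤ 2*Real.pi := by positivity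
  have hcont : Continuous (Function.uncurry fun t u => wker M u * ‖gg s a m (t - u)‖ ^ p) := by
    apply Continuous.mul
    · exact (wker_cont M).comp continuous_snd
    · exact (gg_norm_rpow_cont s a m p hp).comp (continuous_fst.sub continuous_snd)
  have hint : MeasureTheory.Integrable (Function.uncurry fun t u => wker M u * ‖gg s a m (t - u)‖ ^ p)
      ((volume.restrict (Set.Ioc (0:ℝ) (2*Real.pi))).prod
        (volume.restrict (Set.Ioc (0:ℝ) (2*Real.pi)))) := by
    rw [MeasureTheory.Measure.prod_restrict]
    have : MeasureTheory.IntegrableOn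
        (Function.uncurry fun t u => wker M u * ‖gg s a m (t - u)‖ ^ p)
        ((Set.Icc (0:ℝ) (2*Real.pi)) ×ˢ (Set.Icc (0:ℝ) (2*Real.pi)))
        (volume.prod volume) := by
      rw [← MeasureTheory.Measure.volume_eq_prod]
      exact hcont.continuousOn.integrableOn_compact (isCompact_Icc.prod isCompact_Icc)
    exact this.mono_set (Set.prod_mono Set.Ioc_subset_Icc_self Set.Ioc_subset_Icc_self)
  calc (∫ t in (0:ℝ)..(2*Real.pi), ∫ u in (0:ℝ)..(2*Real.pi),
        wker M u * ‖gg s a m (t - u)‖ ^ p)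
      = ∫ t in Set.Ioc (0:ℝ) (2*Real.pi), ∫ u in Set.Ioc (0:ℝ) (2*Real.pi),
          wker M u * ‖gg s a m (t - u)‖ ^ p := by
        rw [intervalIntegral.integral_of_le h2pi]
        refine MeasureTheory.setIntegral_congr_fun measurableSet_Ioc fun t _ => ?_
        rw [intervalIntegral.integral_of_le h2pi]
    _ = ∫ u in Set.Ioc (0:ℝ) (2*Real.pi), ∫ t in Set.Ioc (0:ℝ) (2*Real.pi),
          wker M u * ‖gg s a m (t - u)‖ ^ p := MeasureTheory.integral_integral_swap hint
    _ = ∫ u in Set.Ioc (0:ℝ) (2*Real.pi), wker M u * ∫ t in Set.Ioc (0:ℝ) (2*Real.pi),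
          ‖gg s a m (t - u)‖ ^ p := by
        refine MeasureTheory.setIntegral_congr_fun measurableSet_Ioc fun u _ => ?_
        exact MeasureTheory.integral_const_mul _ _
    _ = ∫ u in Set.Ioc (0:ℝ) (2*Real.pi), wker M u *
          ∫ t in (0:ℝ)..(2*Real.pi), ‖gg s a m t‖ ^ p := by
        refine MeasureTheory.setIntegral_congr_fun measurableSet_Ioc fun u _ => ?_
        rw [← shift_integral s a m u p, intervalIntegral.integral_of_le h2pi]
    _ = (∫ u in (0:ℝ)..(2*Real.pi), wker M u) * ∫ t in (0:ℝ)..(2*Real.pi), ‖gg s a m t‖ ^ p := by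
        rw [MeasureTheory.integral_mul_const]
        congr 1
        exact (intervalIntegral.integral_of_le h2pi).symm
    _ = 2 * Real.pi * M * ∫ t in (0:ℝ)..(2*Real.pi), ‖gg s a m t‖ ^ p := by
        rw [wker_integral]

end Core3

section Core4

variable {ι : Type*} (s : Finset ι) (a : ι → ℂ) (m : ι → ℕ)

lemma gg_shift_cont (t e : ℝ) (he : 0 ≤ e) : Continuous (fun u => ‖gg s a m (t - u)‖ ^ e) :=
  (gg_norm_rpow_cont s a m e he).comp (continuous_const.sub continuous_id)

lemma J_le (p : ℝ) (hp : 2 < p) (M : ℕ) (hm : ∀ n ∈ s, 1 ≤ m n ∧ m n ≤ M) :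
    (∫ t in (0:ℝ)..(2*Real.pi), ‖gg s a m t‖ ^ (p-1) * ‖gd s a m t‖)
      ≤ M * ∫ t in (0:ℝ)..(2*Real.pi), ‖gg s a m t‖ ^ p := by
  have h2pi : (0:ℝ) ≤ 2*Real.pi := by positivity
  have hp0 : (0:ℝ) < p := by linarith
  have hp1 : (0:ℝ) ≤ p - 1 := by linarith
  set X : ℝ → ℝ := fun t => ‖gg s a m t‖ ^ p with hX
  set WW : ℝ → ℝ := fun t => ∫ u in (0:ℝ)..(2*Real.pi), wker M u * ‖gg s a m (t - u)‖ ^ p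
    with hWW
  have hWWc : Continuous WW := by
    have := WW_cont s a m p (le_of_lt hp0) M
    have heq : WW = fun t => ∫ u in Set.Ioc (0:ℝ) (2*Real.pi),
        wker M u * ‖gg s a m (t - u)‖ ^ p := by
      funext t
      rw [hWW]
      exact intervalIntegral.integral_of_le h2pi
    rw [heq]
    exact this
  have hXc : Continuous X := gg_norm_rpow_cont s a m p (le_of_lt hp0)
  have ptw : ∀ t : ℝ, ‖gg s a m t‖ ^ (p-1) * ‖gd s a m t‖
      ≤ (1/(2*Real.pi)) * ((1 - 1/p) * (2*Real.pi*M) * X t + (1/p) * WW t) := by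
    intro t
    have hV := mul_le_mul_of_nonneg_left (norm_gd_le s a m M hm t)
      (Real.rpow_nonneg (norm_nonneg (gg s a m t)) (p-1))
    have heq2 : ‖gg s a m t‖ ^ (p-1) * ((1/(2*Real.pi)) *
        ∫ u in (0:ℝ)..(2*Real.pi), ‖gg s a m (t - u)‖ * wker M u)
        = (1/(2*Real.pi)) * ∫ u in (0:ℝ)..(2*Real.pi),
            ‖gg s a m t‖ ^ (p-1) * (‖gg s a m (t - u)‖ * wker M u) := by
      rw [intervalIntegral.integral_const_mul]
      ring
    have hmono : (∫ u in (0:ℝ)..(2*Real.pi),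
        ‖gg s a m t‖ ^ (p-1) * (‖gg s a m (t - u)‖ * wker M u))
        ≤ ∫ u in (0:ℝ)..(2*Real.pi),
            wker M u * ((1 - 1/p) * X t + (1/p) * ‖gg s a m (t-u)‖ ^ p) := by
      apply intervalIntegral.integral_mono_on h2pi
      · exact Continuous.intervalIntegrable (continuous_const.mul
          ((gg_shift_cont s a m t 1 zero_le_one).congr (fun u => by
            simp [Real.rpow_one]) |>.mul (wker_cont M))) _ _
      · exact Continuous.intervalIntegrable ((wker_cont M).mul (continuous_const.add
          (continuous_const.mul (gg_shift_cont s a m t p (le_of_lt hp0))))) _ _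
      · intro u _
        exact young_step s a m p hp M t u
    have hcomp : (∫ u in (0:ℝ)..(2*Real.pi),
        wker M u * ((1 - 1/p) * X t + (1/p) * ‖gg s a m (t-u)‖ ^ p))
        = (1 - 1/p) * X t * (2*Real.pi*M) + (1/p) * WW t := by
      have hptw : ∀ u ∈ Set.uIcc (0:ℝ) (2*Real.pi),
          wker M u * ((1 - 1/p) * X t + (1/p) * ‖gg s a m (t-u)‖ ^ p)
          = (1 - 1/p) * X t * wker M u + (1/p) * (wker M u * ‖gg s a m (t-u)‖ ^ p) := by
        intro u _; ring
      rw [intervalIntegral.integral_congr hptw, intervalIntegral.integral_add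
        (Continuous.intervalIntegrable (continuous_const.fun_mul (wker_cont M)) _ _)
        (Continuous.intervalIntegrable (continuous_const.fun_mul ((wker_cont M).fun_mul
          (gg_shift_cont s a m t p (le_of_lt hp0)))) _ _),
        intervalIntegral.integral_const_mul, intervalIntegral.integral_const_mul,
        wker_integral]
    calc ‖gg s a m t‖ ^ (p-1) * ‖gd s a m t‖
        ≤ ‖gg s a m t‖ ^ (p-1) * ((1/(2*Real.pi)) *
            ∫ u in (0:ℝ)..(2*Real.pi), ‖gg s a m (t - u)‖ * wker M u) := hV
      _ = (1/(2*Real.pi)) * ∫ u in (0:ℝ)..(2*Real.pi),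
            ‖gg s a m t‖ ^ (p-1) * (‖gg s a m (t - u)‖ * wker M u) := heq2
      _ ≤ (1/(2*Real.pi)) * ∫ u in (0:ℝ)..(2*Real.pi),
            wker M u * ((1 - 1/p) * X t + (1/p) * ‖gg s a m (t-u)‖ ^ p) :=
          mul_le_mul_of_nonneg_left hmono (by positivity)
      _ = (1/(2*Real.pi)) * ((1 - 1/p) * (2*Real.pi*M) * X t + (1/p) * WW t) := by
          rw [hcomp]; ring
  have hJ : (∫ t in (0:ℝ)..(2*Real.pi), ‖gg s a m t‖ ^ (p-1) * ‖gd s a m t‖)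
      ≤ ∫ t in (0:ℝ)..(2*Real.pi),
          (1/(2*Real.pi)) * ((1 - 1/p) * (2*Real.pi*M) * X t + (1/p) * WW t) := by
    apply intervalIntegral.integral_mono_on h2pi
    · exact Continuous.intervalIntegrable
        ((gg_norm_rpow_cont s a m (p-1) hp1).mul (gd_cont s a m).norm) _ _
    · exact Continuous.intervalIntegrable (continuous_const.mul ((continuous_const.mul
        hXc).add (continuous_const.mul hWWc))) _ _
    · intro t _
      exact ptw t
  refine le_trans hJ ?_
  have hfub := fubini_W s a m p (le_of_lt hp0) M
  rw [intervalIntegral.integral_const_mul, intervalIntegral.integral_add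
    (Continuous.intervalIntegrable (continuous_const.fun_mul hXc) _ _)
    (Continuous.intervalIntegrable (continuous_const.fun_mul hWWc) _ _),
    intervalIntegral.integral_const_mul, intervalIntegral.integral_const_mul]
  have hWWint : (∫ t in (0:ℝ)..(2*Real.pi), WW t)
      = 2*Real.pi*M * ∫ t in (0:ℝ)..(2*Real.pi), X t := hfub
  rw [hWWint]
  have hpi : Real.pi ≠ 0 := Real.pi_ne_zero
  have hpne : p ≠ 0 := by linarith
  set y := ∫ t in (0:ℝ)..(2*Real.pi), X t with hy
  apply le_of_eq
  field_simp
  ring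

end Core4

section Core5

variable {ι : Type*} (s : Finset ι) (a : ι → ℂ) (m : ι → ℕ)

lemma core_sup (p : ℝ) (hp : 2 < p) (M : ℕ) (hM : 1 ≤ M)
    (hm : ∀ n ∈ s, 1 ≤ m n ∧ m n ≤ M) :
    (⨆ t : Set.Icc (0:ℝ) 1, ‖gg s a m t.1‖) ^ p
      ≤ (1/(2*Real.pi) + p * M) * ∫ t in Set.Icc (0:ℝ) (2*Real.pi), ‖gg s a m t‖ ^ p := by
  have h2pi : (0:ℝ) < 2*Real.pi := by positivity
  have hp0 : (0:ℝ) < p := by linarith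
  have hp2 : (1:ℝ) ≤ p/2 := by linarith
  have hp21 : (0:ℝ) < p/2 - 1 := by linarith
  set Hfun : ℝ → ℝ := fun t => (‖gg s a m t‖^2) ^ (p/2) with hHfun
  set Hd : ℝ → ℝ := fun t => p/2 * (‖gg s a m t‖^2) ^ (p/2 - 1) *
    (2 * (Inner.inner ℝ (gg s a m t) (gd s a m t) : ℝ)) with hHd
  have hHeq : ∀ t, Hfun t = ‖gg s a m t‖ ^ p := by
    intro t
    show (‖gg s a m t‖^2) ^ (p/2) = ‖gg s a m t‖ ^ p
    rw [← Real.rpow_natCast ‖gg s a m t‖ 2, ← Real.rpow_mul (norm_nonneg _)]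
    norm_num
    congr 1
    ring
  have hH : ∀ t, HasDerivAt Hfun (Hd t) t := by
    intro t
    have hu : HasDerivAt (fun t => ‖gg s a m t‖^2)
        (2 * (Inner.inner ℝ (gg s a m t) (gd s a m t) : ℝ)) t := (gg_deriv s a m t).norm_sq
    have houter := Real.hasDerivAt_rpow_const (x := ‖gg s a m t‖^2) (p := p/2) (Or.inr hp2)
    exact houter.comp t hu
  have hHd_cont : Continuous Hd := by
    apply Continuous.mul
    · apply Continuous.mul continuous_const
      exact (((gg_cont s a m).norm.pow 2).rpow_const (fun _ => Or.inr (le_of_lt hp21)))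
    · exact continuous_const.mul ((gg_cont s a m).inner (gd_cont s a m))
  have hHd_bound : ∀ t, |Hd t| ≤ p * (‖gg s a m t‖ ^ (p-1) * ‖gd s a m t‖) := by
    intro t
    show |p/2 * (‖gg s a m t‖^2) ^ (p/2 - 1) *
      (2 * (Inner.inner ℝ (gg s a m t) (gd s a m t) : ℝ))| ≤ _
    by_cases hz : ‖gg s a m t‖ = 0
    · rw [hz]
      rw [show ((0:ℝ)^2 : ℝ) = 0 from by norm_num, Real.zero_rpow (ne_of_gt hp21),
        Real.zero_rpow (by linarith : p - 1 ≠ 0)]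
      simp
    · have hzpos : 0 < ‖gg s a m t‖ := lt_of_le_of_ne (norm_nonneg _) (Ne.symm hz)
      have h1 : (‖gg s a m t‖^2 : ℝ) ^ (p/2 - 1) = ‖gg s a m t‖ ^ (p - 2) := by
        rw [← Real.rpow_natCast ‖gg s a m t‖ 2, ← Real.rpow_mul (norm_nonneg _)]
        congr 1
        push_cast
        ring
      rw [h1]
      rw [abs_mul, abs_mul]
      have h2 : |p/2| = p/2 := abs_of_pos (by linarith)
      have h3 : |‖gg s a m t‖ ^ (p-2)| = ‖gg s a m t‖ ^ (p-2) :=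
        abs_of_nonneg (Real.rpow_nonneg (norm_nonneg _) _)
      rw [h2, h3, abs_mul, show |(2:ℝ)| = 2 from by norm_num]
      have h4 : |(Inner.inner ℝ (gg s a m t) (gd s a m t) : ℝ)|
          ≤ ‖gg s a m t‖ * ‖gd s a m t‖ := abs_real_inner_le_norm _ _
      have h5 : ‖gg s a m t‖ ^ (p-2) * ‖gg s a m t‖ = ‖gg s a m t‖ ^ (p-1) := by
        nth_rewrite 2 [← Real.rpow_one ‖gg s a m t‖]
        rw [← Real.rpow_add hzpos]
        congr 1
        ring
      calc p/2 * ‖gg s a m t‖ ^ (p-2) * (2 * |(Inner.inner ℝ (gg s a m t) (gd s a m t) : ℝ)|)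
          ≤ p/2 * ‖gg s a m t‖ ^ (p-2) * (2 * (‖gg s a m t‖ * ‖gd s a m t‖)) := by
            apply mul_le_mul_of_nonneg_left _ (by positivity)
            apply mul_le_mul_of_nonneg_left h4 (by norm_num)
        _ = p * (‖gg s a m t‖ ^ (p-2) * ‖gg s a m t‖ * ‖gd s a m t‖) := by ring
        _ = p * (‖gg s a m t‖ ^ (p-1) * ‖gd s a m t‖) := by rw [h5]
  -- maximum point
  obtain ⟨t₀, ht₀mem, ht₀max⟩ := isCompact_Icc.exists_isMaxOn
    (Set.nonempty_Icc.mpr zero_le_one) ((gg_cont s a m).norm.continuousOn)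
  have hbdd : BddAbove (Set.range fun t : Set.Icc (0:ℝ) 1 => ‖gg s a m t.1‖) := by
    refine ⟨∑ n ∈ s, ‖a n‖, ?_⟩
    rintro y ⟨t, rfl⟩
    exact gg_bound s a m t.1
  have hA : (⨆ t : Set.Icc (0:ℝ) 1, ‖gg s a m t.1‖) = ‖gg s a m t₀‖ := by
    apply le_antisymm
    · exact ciSup_le fun t => ht₀max t.2
    · exact le_ciSup hbdd (⟨t₀, ht₀mem⟩ : Set.Icc (0:ℝ) 1)
  rw [hA]
  -- FTC bound
  set D : ℝ := ∫ t in (0:ℝ)..(2*Real.pi), |Hd t| with hD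
  have ht₀mem' : t₀ ∈ Set.Icc (0:ℝ) (2*Real.pi) := by
    constructor
    · exact ht₀mem.1
    · have := ht₀mem.2
      have hpi4 : (1:ℝ) ≤ 2*Real.pi := by nlinarith [Real.pi_gt_three]
      linarith
  have key : ∀ u ∈ Set.Icc (0:ℝ) (2*Real.pi), Hfun t₀ - D ≤ Hfun u := by
    intro u hu
    have hftc := intervalIntegral.integral_eq_sub_of_hasDerivAt
      (f := Hfun) (f' := Hd) (a := u) (b := t₀) (fun r _ => hH r)
      (hHd_cont.intervalIntegrable u t₀)
    have hb1 : Hfun t₀ - Hfun u ≤ |∫ r in u..t₀, Hd r| := by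
      rw [hftc]; exact le_abs_self _
    have hb2 : |∫ r in u..t₀, Hd r| ≤ ∫ r in Set.uIoc u t₀, |Hd r| := by
      have := intervalIntegral.norm_integral_le_integral_norm_uIoc (f := Hd) (a := u) (b := t₀)
        (μ := volume)
      simpa [Real.norm_eq_abs] using this
    have hsub : Set.uIoc u t₀ ⊆ Set.Ioc (0:ℝ) (2*Real.pi) := by
      rw [Set.uIoc]
      apply Set.Ioc_subset_Ioc
      · exact le_min hu.1 ht₀mem'.1
      · exact max_le hu.2 ht₀mem'.2
    have hb3 : (∫ r in Set.uIoc u t₀, |Hd r|) ≤ ∫ r in Set.Ioc (0:ℝ) (2*Real.pi), |Hd r| := by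
      apply MeasureTheory.setIntegral_mono_set
      · exact (hHd_cont.abs.continuousOn.integrableOn_compact isCompact_Icc).mono_set
          Set.Ioc_subset_Icc_self
      · filter_upwards with r using abs_nonneg _
      · exact HasSubset.Subset.eventuallyLE hsub
    have hb4 : (∫ r in Set.Ioc (0:ℝ) (2*Real.pi), |Hd r|) = D := by
      rw [hD, intervalIntegral.integral_of_le (le_of_lt h2pi)]
    linarith [hb1.trans (hb2.trans (hb3.trans_eq hb4))]
  -- integrate over u
  have hint : (2*Real.pi) * (Hfun t₀ - D) ≤ ∫ u in (0:ℝ)..(2*Real.pi), Hfun u := by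
    have hconst : ∫ u in (0:ℝ)..(2*Real.pi), (Hfun t₀ - D) = (2*Real.pi) * (Hfun t₀ - D) := by
      rw [intervalIntegral.integral_const]
      simp [smul_eq_mul]
    rw [← hconst]
    apply intervalIntegral.integral_mono_on (le_of_lt h2pi)
      (intervalIntegrable_const)
      (Continuous.intervalIntegrable (by
        rw [hHfun]
        exact ((gg_cont s a m).norm.pow 2).rpow_const (fun _ => Or.inr (by linarith))) _ _)
      key
  have hB : (∫ u in (0:ℝ)..(2*Real.pi), Hfun u)
      = ∫ t in (0:ℝ)..(2*Real.pi), ‖gg s a m t‖ ^ p :=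
    intervalIntegral.integral_congr (fun t _ => hHeq t)
  have hDb : D ≤ p * (M * ∫ t in (0:ℝ)..(2*Real.pi), ‖gg s a m t‖ ^ p) := by
    have hstep : D ≤ ∫ t in (0:ℝ)..(2*Real.pi), p * (‖gg s a m t‖ ^ (p-1) * ‖gd s a m t‖) := by
      rw [hD]
      apply intervalIntegral.integral_mono_on (le_of_lt h2pi)
        (hHd_cont.abs.intervalIntegrable _ _)
        (Continuous.intervalIntegrable (continuous_const.mul
          ((gg_norm_rpow_cont s a m (p-1) (by linarith)).mul (gd_cont s a m).norm)) _ _)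
        (fun t _ => hHd_bound t)
    rw [intervalIntegral.integral_const_mul] at hstep
    refine hstep.trans ?_
    exact mul_le_mul_of_nonneg_left (J_le s a m p hp M hm) (by linarith)
  -- combine
  have hBnn : 0 ≤ ∫ t in (0:ℝ)..(2*Real.pi), ‖gg s a m t‖ ^ p := by
    apply intervalIntegral.integral_nonneg (le_of_lt h2pi)
    intro t _
    exact Real.rpow_nonneg (norm_nonneg _) _
  have hgoal : ‖gg s a m t₀‖ ^ p ≤ (1/(2*Real.pi) + p * M) *
      ∫ t in (0:ℝ)..(2*Real.pi), ‖gg s a m t‖ ^ p := by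
    have h1 : Hfun t₀ ≤ (1/(2*Real.pi)) * (∫ t in (0:ℝ)..(2*Real.pi), ‖gg s a m t‖ ^ p) + D := by
      rw [← hB]
      have h2 : Hfun t₀ - D ≤ (∫ u in (0:ℝ)..(2*Real.pi), Hfun u) / (2*Real.pi) := by
        rw [le_div_iff₀ h2pi]
        linarith [hint]
      have h3 : (∫ u in (0:ℝ)..(2*Real.pi), Hfun u) / (2*Real.pi)
          = (1/(2*Real.pi)) * ∫ u in (0:ℝ)..(2*Real.pi), Hfun u := by ring
      rw [h3] at h2
      linarith
    rw [← hHeq t₀]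
    calc Hfun t₀ ≤ (1/(2*Real.pi)) * (∫ t in (0:ℝ)..(2*Real.pi), ‖gg s a m t‖ ^ p) + D := h1
      _ ≤ (1/(2*Real.pi)) * (∫ t in (0:ℝ)..(2*Real.pi), ‖gg s a m t‖ ^ p)
          + p * (M * ∫ t in (0:ℝ)..(2*Real.pi), ‖gg s a m t‖ ^ p) := by linarith [hDb]
      _ = (1/(2*Real.pi) + p * M) * ∫ t in (0:ℝ)..(2*Real.pi), ‖gg s a m t‖ ^ p := by ring
  have hIcc : (∫ t in Set.Icc (0:ℝ) (2*Real.pi), ‖gg s a m t‖ ^ p)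
      = ∫ t in (0:ℝ)..(2*Real.pi), ‖gg s a m t‖ ^ p := by
    rw [intervalIntegral.integral_of_le (le_of_lt h2pi),
      MeasureTheory.integral_Icc_eq_integral_Ioc]
  rw [hIcc]
  exact hgoal

end Core5

def mcoef {d : ℕ} (n : Fin d → ℤ) : ℕ := ∑ i, (n i).natAbs ^ 2

lemma mcoef_cast {d : ℕ} (n : Fin d → ℤ) : ((mcoef n : ℝ)) = ∑ i, ((n i : ℝ))^2 := by
  unfold mcoef
  push_cast [Nat.cast_natAbs]
  exact Finset.sum_congr rfl fun i _ => by rw [_root_.sq_abs]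

lemma freq_bounds {d : ℕ} (k : ℕ) (n : Fin d → ℤ)
    (hlo : ((2:ℝ)^k)/2 < inorm n) (hhi : inorm n ≤ (2:ℝ)^k) :
    1 ≤ mcoef n ∧ mcoef n ≤ 4^k := by
  have hS : (0:ℝ) ≤ ∑ i, ((n i : ℝ))^2 := Finset.sum_nonneg fun i _ => sq_nonneg _
  have hsq := Real.sq_sqrt hS
  have h2k : (1:ℝ) ≤ (2:ℝ)^k := one_le_pow₀ (by norm_num)
  constructor
  · by_contra h
    have h0 : mcoef n = 0 := by omega
    have : (∑ i, ((n i : ℝ))^2) = 0 := by rw [← mcoef_cast, h0]; norm_num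
    rw [inorm] at hlo
    rw [this, Real.sqrt_zero] at hlo
    nlinarith
  · have h1 : (∑ i, ((n i : ℝ))^2) ≤ ((2:ℝ)^k)^2 := by
      rw [inorm] at hhi
      nlinarith [Real.sqrt_nonneg (∑ i, ((n i : ℝ))^2)]
    have h2 : ((mcoef n : ℝ)) ≤ ((4^k : ℕ) : ℝ) := by
      rw [mcoef_cast]
      refine h1.trans (le_of_eq ?_)
      push_cast
      rw [show (4:ℝ) = 2^2 from by norm_num, ← pow_mul, ← pow_mul]
      ring_nf
    exact_mod_cast h2

lemma coord_bound {d : ℕ} (k : ℕ) (n : Fin d → ℤ) (hhi : inorm n ≤ (2:ℝ)^k) (i : Fin d) :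
    n i ∈ Finset.Icc (-(2^k : ℤ)) (2^k) := by
  have hS : (0:ℝ) ≤ ∑ i, ((n i : ℝ))^2 := Finset.sum_nonneg fun i _ => sq_nonneg _
  have h1 : (∑ j, ((n j : ℝ))^2) ≤ ((2:ℝ)^k)^2 := by
    rw [inorm] at hhi
    nlinarith [Real.sqrt_nonneg (∑ i, ((n i : ℝ))^2), Real.sq_sqrt hS]
  have h2 : ((n i : ℝ))^2 ≤ ((2:ℝ)^k)^2 := by
    refine le_trans ?_ h1
    exact Finset.single_le_sum (f := fun j => ((n j : ℝ))^2) (fun j _ => sq_nonneg _)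
      (Finset.mem_univ i)
  have h3 : -((2:ℝ)^k) ≤ (n i : ℝ) ∧ ((n i : ℝ)) ≤ (2:ℝ)^k := by
    have hpow : (0:ℝ) < 2^k := by positivity
    constructor <;> nlinarith [sq_nonneg ((n i : ℝ) + 2^k), sq_nonneg ((n i : ℝ) - 2^k), hpow]
  rw [Finset.mem_Icc]
  constructor
  · exact_mod_cast h3.1
  · exact_mod_cast h3.2



/-- Frequency-localized maximal estimate on `𝕋^d`: for `f` with Fourier support in the
annulus `|n| ∼ N`, assuming the Strichartz estimate at `p = 2(d+2)/d` one has
`‖sup_{0≤t≤1}|e^{itΔ}f|‖_{L^{2(d+2)/d}(𝕋^d)} ≲ N^{d/(d+2)+ε} ‖f‖_{L²}`. -/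
theorem torus_localized_maximal_estimate (d : ℕ) (hd : 1 ≤ d)
    (ε : ℝ) (hε : 0 < ε) (C₁ : ℝ) (hC₁ : 0 < C₁) :
    ∃ C > (0:ℝ), ∀ k : ℕ, ∀ c : (Fin d → ℤ) → ℂ,
      (∀ n, c n ≠ 0 → ((2:ℝ)^k)/2 < inorm n ∧ inorm n ≤ (2:ℝ)^k) →
      (stLp (2*((d:ℝ)+2)/d) (freeSol c)
          ≤ C₁ * ((2:ℝ)^k) ^ ((d:ℝ)/2 - ((d:ℝ)+2)/(2*((d:ℝ)+2)/d) + ε) * HsNorm 0 c) →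
      torusLp (2*((d:ℝ)+2)/d) (fun x => ⨆ t : Set.Icc (0:ℝ) 1, ‖freeSol c x t.1‖)
        ≤ C * ((2:ℝ)^k) ^ ((d:ℝ)/(d+2) + ε) * HsNorm 0 c := by
  classical
  have hd0 : (0:ℝ) < d := by exact_mod_cast hd
  set p : ℝ := 2*((d:ℝ)+2)/d with hpdef
  have hp : 2 < p := by
    rw [hpdef, lt_div_iff₀ hd0]
    linarith
  have hp0 : (0:ℝ) < p := by linarith
  refine ⟨(1 + p) * C₁, by positivity, ?_⟩
  intro k c hsupp hstri
  set M : ℕ := 4^k with hMdef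
  have hM : 1 ≤ M := Nat.one_le_pow _ _ (by norm_num)
  set sfin : Finset (Fin d → ℤ) :=
    (Fintype.piFinset (fun _ : Fin d => Finset.Icc (-(2^k : ℤ)) (2^k))).filter
      (fun n => c n ≠ 0) with hsfin
  have hmem : ∀ n ∈ sfin, 1 ≤ mcoef n ∧ mcoef n ≤ M := by
    intro n hn
    rw [hsfin, Finset.mem_filter] at hn
    exact freq_bounds k n (hsupp n hn.2).1 (hsupp n hn.2).2
  set A : (Fin d → ℝ) → (Fin d → ℤ) → ℂ :=
    fun x n => c n * Complex.exp (((∑ i, (n i : ℝ) * x i : ℝ) : ℂ) * Complex.I) with hA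
  have hfs : ∀ x t, freeSol c x t = gg sfin (A x) mcoef t := by
    intro x t
    rw [freeSol]
    rw [tsum_eq_sum (s := sfin) (f := fun n => c n * Complex.exp (Complex.I *
      (((∑ i, (n i : ℝ) * x i) - (∑ i, ((n i : ℝ))^2) * t : ℝ) : ℂ))) ?_]
    · refine Finset.sum_congr rfl fun n _ => ?_
      rw [hA]
      show c n * Complex.exp (Complex.I *
        (((∑ i, (n i : ℝ) * x i) - (∑ i, ((n i : ℝ))^2) * t : ℝ) : ℂ))
        = c n * Complex.exp (((∑ i, (n i : ℝ) * x i : ℝ) : ℂ) * Complex.I) *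
          Complex.exp (((-((mcoef n : ℝ) * t)) : ℝ) * Complex.I)
      rw [mul_assoc, ← Complex.exp_add]
      congr 2
      rw [show (∑ i, ((n i : ℝ))^2) = ((mcoef n : ℝ)) from (mcoef_cast n).symm]
      push_cast
      ring
    · intro n hn
      by_cases hc : c n = 0
      · simp [hc]
      · exfalso
        apply hn
        rw [hsfin, Finset.mem_filter]
        refine ⟨?_, hc⟩
        rw [Fintype.mem_piFinset]
        exact fun i => coord_bound k n (hsupp n hc).2 i
  have hAnorm : ∀ x, (∑ n ∈ sfin, ‖A x n‖) = ∑ n ∈ sfin, ‖c n‖ := by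
    intro x
    refine Finset.sum_congr rfl fun n _ => ?_
    rw [hA]
    show ‖c n * Complex.exp (((∑ i, (n i : ℝ) * x i : ℝ) : ℂ) * Complex.I)‖ = ‖c n‖
    rw [norm_mul, Complex.norm_exp_ofReal_mul_I, mul_one]
  -- pointwise bound from core_sup
  set c₀ : ℝ := 1/(2*Real.pi) + p * M with hc₀
  have hc₀0 : 0 ≤ c₀ := by positivity
  set Ifun : (Fin d → ℝ) → ℝ := fun x => ∫ t in Set.Icc (0:ℝ) (2*Real.pi),
    ‖freeSol c x t‖ ^ p with hIfun
  have hptw : ∀ x, |⨆ t : Set.Icc (0:ℝ) 1, ‖freeSol c x t.1‖| ^ p ≤ c₀ * Ifun x := by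
    intro x
    have hsup_nonneg : 0 ≤ ⨆ t : Set.Icc (0:ℝ) 1, ‖freeSol c x t.1‖ :=
      Real.iSup_nonneg fun t => norm_nonneg _
    rw [_root_.abs_of_nonneg hsup_nonneg]
    have hs1 : (⨆ t : Set.Icc (0:ℝ) 1, ‖freeSol c x t.1‖)
        = ⨆ t : Set.Icc (0:ℝ) 1, ‖gg sfin (A x) mcoef t.1‖ := by
      exact iSup_congr fun t => by rw [hfs x t.1]
    have hs2 : Ifun x = ∫ t in Set.Icc (0:ℝ) (2*Real.pi), ‖gg sfin (A x) mcoef t‖ ^ p := by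
      rw [hIfun]
      exact MeasureTheory.setIntegral_congr_fun measurableSet_Icc fun t _ => by rw [hfs x t]
    rw [hs1, hs2]
    exact core_sup sfin (A x) mcoef p hp M hM hmem
  -- continuity and integrability of Ifun
  have hIcont : Continuous Ifun := by
    have heq : Ifun = fun x => ∫ t in Set.Icc (0:ℝ) (2*Real.pi),
        ‖gg sfin (A x) mcoef t‖ ^ p := by
      funext x
      rw [hIfun]
      exact MeasureTheory.setIntegral_congr_fun measurableSet_Icc fun t _ => by rw [hfs x t]
    rw [heq]
    have hAcont : ∀ n, Continuous (fun x => A x n) := by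
      intro n
      rw [hA]
      apply continuous_const.mul
      apply Complex.continuous_exp.comp
      apply Continuous.mul _ continuous_const
      exact Complex.continuous_ofReal.comp (continuous_finset_sum _ fun i _ =>
        (continuous_const.mul (continuous_apply i)))
    apply MeasureTheory.continuous_of_dominated
      (bound := fun _ => (∑ n ∈ sfin, ‖c n‖) ^ p)
    · intro x
      exact ((gg_norm_rpow_cont sfin (A x) mcoef p (le_of_lt hp0))).aestronglyMeasurable
    · intro x
      filter_upwards with t
      rw [Real.norm_of_nonneg (Real.rpow_nonneg (norm_nonneg _) p)]
      apply Real.rpow_le_rpow (norm_nonneg _) _ (le_of_lt hp0)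
      refine (gg_bound sfin (A x) mcoef t).trans (le_of_eq (hAnorm x))
    · exact MeasureTheory.integrableOn_const measure_Icc_lt_top.ne
    · filter_upwards with t
      unfold gg
      exact (Continuous.norm (continuous_finset_sum _ fun n _ =>
        ((hAcont n).mul continuous_const))).rpow_const (fun _ => Or.inr (le_of_lt hp0))
  have hbox_compact : IsCompact (torusBox d) := isCompact_univ_pi fun _ => isCompact_Icc
  have hIint : MeasureTheory.IntegrableOn Ifun (torusBox d) :=
    hIcont.continuousOn.integrableOn_compact hbox_compact
  have hInn : ∀ x, 0 ≤ Ifun x := fun x =>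
    MeasureTheory.setIntegral_nonneg measurableSet_Icc fun t _ =>
      Real.rpow_nonneg (norm_nonneg _) _
  -- integrate
  have hmain : (∫ x in torusBox d, |⨆ t : Set.Icc (0:ℝ) 1, ‖freeSol c x t.1‖| ^ p)
      ≤ c₀ * ∫ x in torusBox d, Ifun x := by
    rw [← MeasureTheory.integral_const_mul]
    apply MeasureTheory.integral_mono_of_nonneg
    · filter_upwards with x
      exact Real.rpow_nonneg (abs_nonneg _) _
    · exact hIint.const_mul c₀
    · filter_upwards with x
      exact hptw x
  have hIIn : 0 ≤ ∫ x in torusBox d, Ifun x :=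
    MeasureTheory.integral_nonneg fun x => hInn x
  -- pass to Lp norms
  have hLp : torusLp p (fun x => ⨆ t : Set.Icc (0:ℝ) 1, ‖freeSol c x t.1‖)
      ≤ c₀ ^ (1/p) * stLp p (freeSol c) := by
    rw [torusLp, stLp]
    have h1 : (∫ x in torusBox d, |⨆ t : Set.Icc (0:ℝ) 1, ‖freeSol c x t.1‖| ^ p) ^ (1/p)
        ≤ (c₀ * ∫ x in torusBox d, Ifun x) ^ (1/p) := by
      apply Real.rpow_le_rpow _ hmain (by positivity)
      apply MeasureTheory.integral_nonneg
      intro x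
      exact Real.rpow_nonneg (abs_nonneg _) _
    rw [Real.mul_rpow hc₀0 hIIn] at h1
    exact h1
  refine hLp.trans ?_
  -- Strichartz
  have hstLp_nonneg : 0 ≤ stLp p (freeSol c) := by
    rw [stLp]
    positivity
  have hstep2 : c₀ ^ (1/p) * stLp p (freeSol c)
      ≤ c₀ ^ (1/p) * (C₁ * ((2:ℝ)^k) ^ ((d:ℝ)/2 - ((d:ℝ)+2)/(2*((d:ℝ)+2)/d) + ε) * HsNorm 0 c) :=
    mul_le_mul_of_nonneg_left hstri (Real.rpow_nonneg hc₀0 _)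
  refine hstep2.trans ?_
  -- exponent arithmetic
  set N : ℝ := (2:ℝ)^k with hN
  have hN1 : (1:ℝ) ≤ N := one_le_pow₀ (by norm_num)
  have hN0 : (0:ℝ) < N := by linarith
  have hexp0 : (d:ℝ)/2 - ((d:ℝ)+2)/(2*((d:ℝ)+2)/d) + ε = ε := by
    field_simp
    ring
  have hMcast : (M:ℝ) = N ^ (2:ℝ) := by
    rw [show (2:ℝ) = ((2:ℕ):ℝ) from by norm_num, Real.rpow_natCast, hMdef, hN]
    push_cast
    rw [show (4:ℝ) = 2^2 from by norm_num, ← pow_mul, ← pow_mul]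
    ring_nf
  have hc₀le : c₀ ≤ (1+p) * (M:ℝ) := by
    have hM1 : (1:ℝ) ≤ (M:ℝ) := by exact_mod_cast hM
    have hpi1 : 1/(2*Real.pi) ≤ 1 := by
      rw [div_le_one (by positivity)]
      nlinarith [Real.pi_gt_three]
    rw [hc₀]
    nlinarith
  have hc₀p : c₀ ^ (1/p) ≤ (1+p) * N ^ ((d:ℝ)/(d+2)) := by
    have h1 : c₀ ^ (1/p) ≤ ((1+p) * (M:ℝ)) ^ (1/p) :=
      Real.rpow_le_rpow hc₀0 hc₀le (by positivity)
    have hM0 : (0:ℝ) ≤ (M:ℝ) := by positivity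
    rw [Real.mul_rpow (by linarith) hM0] at h1
    have h2 : ((1:ℝ)+p) ^ (1/p) ≤ (1+p) := by
      nth_rewrite 2 [← Real.rpow_one (1+p)]
      apply Real.rpow_le_rpow_of_exponent_le (by linarith)
      rw [div_le_one hp0]
      linarith
    have h3 : (M:ℝ) ^ (1/p) = N ^ ((d:ℝ)/(d+2)) := by
      rw [hMcast, ← Real.rpow_mul (le_of_lt hN0)]
      congr 1
      rw [hpdef]
      field_simp
    rw [h3] at h1
    refine h1.trans ?_
    apply mul_le_mul_of_nonneg_right h2 (Real.rpow_nonneg (le_of_lt hN0) _)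
  -- final combination
  have hHs : 0 ≤ HsNorm 0 c := Real.sqrt_nonneg _
  rw [hexp0]
  calc c₀ ^ (1/p) * (C₁ * N ^ ε * HsNorm 0 c)
      ≤ ((1+p) * N ^ ((d:ℝ)/(d+2))) * (C₁ * N ^ ε * HsNorm 0 c) := by
        apply mul_le_mul_of_nonneg_right hc₀p
        positivity
    _ = (1+p) * C₁ * (N ^ ((d:ℝ)/(d+2)) * N ^ ε) * HsNorm 0 c := by ring
    _ = (1+p) * C₁ * N ^ ((d:ℝ)/(d+2) + ε) * HsNorm 0 c := by
        rw [← Real.rpow_add hN0]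
end
end

section
/- Fix $\mu \in \mathbb{Z}$ and dyadic scales $N_1, N_2, N_3$ on $\mathbb{Z}^2$. Consider the set $S = \{(n_1, n_2, n_3) \in (\mathbb{Z}^2)^3 : |n_j| \sim N_j,\ n_2 \neq n_1,\ n_2 \neq n_3,\ n_1 \neq n_3,\ 2(n_1 - n_2)\cdot(n_3 - n_2) = \mu\}$. Then $\# S \lesssim N_1 N_2^2 N_3^2$. -/
noncomputable section

/-- Euclidean norm of a lattice point in `ℤ²`. -/
def znorm (n : ℤ × ℤ) : ℝ := Real.sqrt ((n.1:ℝ)^2 + (n.2:ℝ)^2)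

/-- Dot product on `ℤ²`. -/
def zdot (a b : ℤ × ℤ) : ℤ := a.1 * b.1 + a.2 * b.2

/-- Square box of lattice points. -/
def zbox (M : ℤ) : Finset (ℤ × ℤ) := Finset.Icc (-M) M ×ˢ Finset.Icc (-M) M

lemma zbox_card (M : ℤ) : (zbox M).card = (2*M+1).toNat * (2*M+1).toNat := by
  simp [zbox, Int.card_Icc]
  congr 1 <;> · congr 1; ring

lemma mem_zbox_of_znorm {n : ℤ × ℤ} {M : ℤ} (h : znorm n ≤ (M:ℝ)) : n ∈ zbox M := by
  have h1 : |(n.1:ℝ)| ≤ znorm n := by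
    rw [znorm, ← Real.sqrt_sq_eq_abs]
    exact Real.sqrt_le_sqrt (by nlinarith [sq_nonneg (n.2:ℝ)])
  have h2 : |(n.2:ℝ)| ≤ znorm n := by
    rw [znorm, ← Real.sqrt_sq_eq_abs]
    exact Real.sqrt_le_sqrt (by nlinarith [sq_nonneg (n.1:ℝ)])
  have h1' : |n.1| ≤ M := by exact_mod_cast (h1.trans h : |(n.1:ℝ)| ≤ (M:ℝ))
  have h2' : |n.2| ≤ M := by exact_mod_cast (h2.trans h : |(n.2:ℝ)| ≤ (M:ℝ))
  simp [zbox, Finset.mem_Icc, abs_le.1 h1', abs_le.1 h2']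

/-- Lattice points on a line inside a box: at most `2M+1`. -/
lemma line_count (M : ℤ) (a : ℤ × ℤ) (ha : a ≠ 0) (c : ℤ) :
    ((zbox M).filter (fun n => a.1 * n.1 + a.2 * n.2 = c)).card ≤ (2*M+1).toNat := by
  have hM : (Finset.Icc (-M) M).card = (2*M+1).toNat := by
    rw [Int.card_Icc]; congr 1; ring
  have ha' : a.1 ≠ 0 ∨ a.2 ≠ 0 := by
    by_contra hc
    push_neg at hc
    exact ha (Prod.ext hc.1 hc.2)
  rcases ha' with h | h
  · rw [← hM]
    apply Finset.card_le_card_of_injOn Prod.snd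
    · intro n hn
      simp only [Finset.mem_coe, Finset.mem_filter, zbox, Finset.mem_product] at hn
      exact hn.1.2
    · intro x hx y hy hxy
      simp only [Finset.coe_filter, Set.mem_setOf_eq] at hx hy
      have : a.1 * x.1 = a.1 * y.1 := by
        have h1 := hx.2; have h2 := hy.2; rw [hxy] at h1; omega
      have : x.1 = y.1 := by
        exact mul_left_cancel₀ h this
      exact Prod.ext this hxy
  · rw [← hM]
    apply Finset.card_le_card_of_injOn Prod.fst
    · intro n hn
      simp only [Finset.mem_coe, Finset.mem_filter, zbox, Finset.mem_product] at hn
      exact hn.1.1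
    · intro x hx y hy hxy
      simp only [Finset.coe_filter, Set.mem_setOf_eq] at hx hy
      have : a.2 * x.2 = a.2 * y.2 := by
        have h1 := hx.2; have h2 := hy.2; rw [hxy] at h1; omega
      have : x.2 = y.2 := by
        exact mul_left_cancel₀ h this
      exact Prod.ext hxy this

/-- Lattice-point count for the cubic resonance relation on `𝕋²`: the set of triples
`(n₁,n₂,n₃)` with `|n_j| ∼ N_j`, pairwise constraints, and `2(n₁-n₂)·(n₃-n₂) = μ` has
cardinality `≲ N₁ N₂² N₃²`. -/
theorem resonant_triples_count :
    ∃ C > (0:ℝ), ∀ μ : ℤ, ∀ k₁ k₂ k₃ : ℕ,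
      letI S : Set ((ℤ × ℤ) × (ℤ × ℤ) × (ℤ × ℤ)) :=
        {x | ((2:ℝ)^k₁ ≤ znorm x.1 ∧ znorm x.1 < 2*(2:ℝ)^k₁)
          ∧ ((2:ℝ)^k₂ ≤ znorm x.2.1 ∧ znorm x.2.1 < 2*(2:ℝ)^k₂)
          ∧ ((2:ℝ)^k₃ ≤ znorm x.2.2 ∧ znorm x.2.2 < 2*(2:ℝ)^k₃)
          ∧ x.2.1 ≠ x.1 ∧ x.2.1 ≠ x.2.2 ∧ x.1 ≠ x.2.2
          ∧ 2 * zdot (x.1 - x.2.1) (x.2.2 - x.2.1) = μ}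
      S.Finite ∧ (S.ncard : ℝ) ≤ C * (2:ℝ)^k₁ * ((2:ℝ)^k₂)^2 * ((2:ℝ)^k₃)^2 := by
  refine ⟨3125, by norm_num, ?_⟩
  intro μ k₁ k₂ k₃
  set M₁ : ℤ := 2 * 2^k₁ with hM₁
  set M₂ : ℤ := 2 * 2^k₂ with hM₂
  set M₃ : ℤ := 2 * 2^k₃ with hM₃
  set T : Finset ((ℤ × ℤ) × (ℤ × ℤ) × (ℤ × ℤ)) :=
    (zbox M₂ ×ˢ zbox M₃).biUnion (fun p =>
      ((zbox M₁).filter (fun n₁ => p.1 ≠ p.2 ∧ 2 * zdot (n₁ - p.1) (p.2 - p.1) = μ)).image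
        (fun n₁ => (n₁, p.1, p.2))) with hT
  set S : Set ((ℤ × ℤ) × (ℤ × ℤ) × (ℤ × ℤ)) :=
    {x | ((2:ℝ)^k₁ ≤ znorm x.1 ∧ znorm x.1 < 2*(2:ℝ)^k₁)
      ∧ ((2:ℝ)^k₂ ≤ znorm x.2.1 ∧ znorm x.2.1 < 2*(2:ℝ)^k₂)
      ∧ ((2:ℝ)^k₃ ≤ znorm x.2.2 ∧ znorm x.2.2 < 2*(2:ℝ)^k₃)
      ∧ x.2.1 ≠ x.1 ∧ x.2.1 ≠ x.2.2 ∧ x.1 ≠ x.2.2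
      ∧ 2 * zdot (x.1 - x.2.1) (x.2.2 - x.2.1) = μ} with hS
  have hmem : ∀ j : ℕ, ∀ n : ℤ × ℤ, znorm n < 2*(2:ℝ)^j → n ∈ zbox (2*2^j) := by
    intro j n hn
    apply mem_zbox_of_znorm
    push_cast
    exact hn.le
  have hsub : S ⊆ ↑T := by
    intro x hx
    obtain ⟨h1, h2, h3, h4, h5, h6, h7⟩ := hx
    simp only [hT, Finset.coe_biUnion, Set.mem_iUnion, Finset.mem_coe, Finset.mem_product,
      Finset.mem_image, Finset.mem_filter]
    refine ⟨(x.2.1, x.2.2), ⟨hmem k₂ _ h2.2, hmem k₃ _ h3.2⟩, x.1,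
      ⟨hmem k₁ _ h1.2, h5, h7⟩, rfl⟩
  have hfin : S.Finite := Set.Finite.subset T.finite_toSet hsub
  refine ⟨hfin, ?_⟩
  have hcard : S.ncard ≤ T.card := by
    rw [← Set.ncard_coe_finset T]
    exact Set.ncard_le_ncard hsub T.finite_toSet
  have hTcard : T.card ≤ (2*M₂+1).toNat * (2*M₂+1).toNat * ((2*M₃+1).toNat * (2*M₃+1).toNat)
      * (2*M₁+1).toNat := by
    calc T.card ≤ ∑ p ∈ zbox M₂ ×ˢ zbox M₃,
        (((zbox M₁).filter (fun n₁ => p.1 ≠ p.2 ∧ 2 * zdot (n₁ - p.1) (p.2 - p.1) = μ)).image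
          (fun n₁ => (n₁, p.1, p.2))).card := Finset.card_biUnion_le
      _ ≤ ∑ _p ∈ zbox M₂ ×ˢ zbox M₃, (2*M₁+1).toNat := by
          apply Finset.sum_le_sum
          intro p _
          refine (Finset.card_image_le).trans ?_
          by_cases hp : p.1 = p.2
          · simp [hp]
          · have key : ((zbox M₁).filter (fun n₁ => p.1 ≠ p.2 ∧
                2 * zdot (n₁ - p.1) (p.2 - p.1) = μ)) ⊆
                ((zbox M₁).filter (fun n =>
                  (2*(p.2.1 - p.1.1)) * n.1 + (2*(p.2.2 - p.1.2)) * n.2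
                    = μ + 2*(p.1.1*(p.2.1-p.1.1) + p.1.2*(p.2.2-p.1.2)))) := by
              intro n hn
              simp only [Finset.mem_filter] at hn ⊢
              refine ⟨hn.1, ?_⟩
              have := hn.2.2
              simp only [zdot, Prod.fst_sub, Prod.snd_sub] at this
              ring_nf
              ring_nf at this
              linarith [this]
            refine (Finset.card_le_card key).trans
              (line_count M₁ (2*(p.2.1 - p.1.1), 2*(p.2.2 - p.1.2)) ?_ _)
            intro hc
            apply hp
            have h1 := congrArg Prod.fst hc
            have h2 := congrArg Prod.snd hc
            simp at h1 h2
            exact Prod.ext (by omega) (by omega)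
      _ = _ := by
          rw [Finset.sum_const, Finset.card_product, zbox_card, zbox_card, smul_eq_mul]
  have hle : (S.ncard : ℝ) ≤ ((2*M₂+1).toNat * (2*M₂+1).toNat *
      ((2*M₃+1).toNat * (2*M₃+1).toNat) * (2*M₁+1).toNat : ℕ) := by
    exact_mod_cast hcard.trans hTcard
  refine hle.trans ?_
  have e : ∀ j : ℕ, (((2*(2*2^j)+1 : ℤ).toNat : ℝ)) ≤ 5 * (2:ℝ)^j := by
    intro j
    have h0 : (0:ℤ) ≤ 2*(2*2^j)+1 := by positivity
    have h1 : ((2*(2*2^j)+1 : ℤ).toNat : ℝ) = ((2*(2*2^j)+1 : ℤ) : ℝ) := by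
      exact_mod_cast congrArg (Int.cast : ℤ → ℝ) (Int.toNat_of_nonneg h0)
    rw [h1]
    push_cast
    have : (1:ℝ) ≤ 2^j := one_le_pow₀ (by norm_num)
    linarith
  push_cast
  have e₁ := e k₁
  have e₂ := e k₂
  have e₃ := e k₃
  rw [hM₁, hM₂, hM₃]
  have p₁ : (0:ℝ) ≤ (((2*(2*2^k₁)+1 : ℤ)).toNat : ℝ) := by positivity
  have p₂ : (0:ℝ) ≤ (((2*(2*2^k₂)+1 : ℤ)).toNat : ℝ) := by positivity
  have p₃ : (0:ℝ) ≤ (((2*(2*2^k₃)+1 : ℤ)).toNat : ℝ) := by positivity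
  have q₁ : (0:ℝ) ≤ 5 * (2:ℝ)^k₁ := by positivity
  have q₂ : (0:ℝ) ≤ 5 * (2:ℝ)^k₂ := by positivity
  have q₃ : (0:ℝ) ≤ 5 * (2:ℝ)^k₃ := by positivity
  calc (((2*(2*2^k₂)+1 : ℤ)).toNat : ℝ) * (((2*(2*2^k₂)+1 : ℤ)).toNat : ℝ) *
      ((((2*(2*2^k₃)+1 : ℤ)).toNat : ℝ) * (((2*(2*2^k₃)+1 : ℤ)).toNat : ℝ)) *
      (((2*(2*2^k₁)+1 : ℤ)).toNat : ℝ)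
      ≤ (5*(2:ℝ)^k₂) * (5*(2:ℝ)^k₂) * ((5*(2:ℝ)^k₃) * (5*(2:ℝ)^k₃)) * (5*(2:ℝ)^k₁) := by
        gcongr
    _ = 3125 * (2:ℝ)^k₁ * ((2:ℝ)^k₂)^2 * ((2:ℝ)^k₃)^2 := by ring
end
end
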